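/- Let P, ρ : ℝ → ℂ^{N_g × N_g} be three times differentiable, H : ℝ → ℂ^{N_g × N_g} twice differentiable, and let H_t, H_tt : ℝ → ℂ^{N_g × N_g}, A, B : ℝ → L(ℂ^{N_g × N_g}, ℂ^{N_g × N_g}), and C : ℝ → Bil(ℂ^{N_g × N_g} × ℂ^{N_g × N_g}, ℂ^{N_g × N_g}) be given. Assume for all t: (i) i P' = [H, P]; (ii) i ρ' = [H, ρ]; (iii) H' = H_t + A(ρ'); (iv) H_t' = H_tt + B(ρ'); (v) the derivative of t ↦ A(t) as a map into linear operators satisfies A'(t)(X) = B(t)(X) + C(t)(ρ'(t), X) for all matrices X; (vi) P(t) is an orthogonal projection (P² = P, P† = P). Then in the operator norm, ‖P'''(t)‖ ≤ ‖[H_tt, P]‖ + 2‖B([H, ρ])‖ + ‖C([H, ρ], [H, ρ])‖ + ‖A([H_t, ρ])‖ + ‖A([A([H, ρ]), ρ])‖ + ‖A([H, [H, ρ]])‖ + 2‖[H_t, [H, P]]‖ + 2‖[A([H, ρ]), [H, P]]‖ + ‖[H, [H_t, P]]‖ + ‖[H, [A([H, ρ]), P]]‖ + ‖[H, [H, [H,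 P]]]‖, with all quantities evaluated at t. -/

import Mathlib

open Matrix
open scoped Matrix.Norms.L2Operator


open Matrix
open scoped Matrix.Norms.L2Operator
open scoped InnerProductSpace

section Aux

lemma clm_proj_comm_norm_le' {E : Type*} [NormedAddCommGroup E] [InnerProductSpace ℂ E]
    [CompleteSpace E] (T Q : E →L[ℂ] E) (hQ2 : Q * Q = Q)
    (hQa : ContinuousLinearMap.adjoint Q = Q) :
    ‖T * Q - Q * T‖ ≤ ‖T‖ := by
  have hQQ : ∀ x : E, Q (Q x) = Q x := fun x => by
    rw [← ContinuousLinearMap.mul_apply, hQ2]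
  have hsym : ∀ x y : E, ⟪Q x, y⟫_ℂ = ⟪x, Q y⟫_ℂ := fun x y => by
    conv_lhs => rw [← hQa]
    exact ContinuousLinearMap.adjoint_inner_left Q y x
  have orth : ∀ x y : E, ⟪Q x, y - Q y⟫_ℂ = 0 := fun x y => by
    rw [hsym]
    have : Q (y - Q y) = 0 := by rw [map_sub, hQQ, sub_self]
    rw [this, inner_zero_right]
  have pyth : ∀ y : E, ‖Q y‖ * ‖Q y‖ + ‖y - Q y‖ * ‖y - Q y‖ = ‖y‖ * ‖y‖ := fun y => by
    have h := norm_add_sq_eq_norm_sq_add_norm_sq_of_inner_eq_zero (Q y) (y - Q y) (orth y y)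
    rw [add_sub_cancel] at h
    linarith
  refine ContinuousLinearMap.opNorm_le_bound _ (norm_nonneg T) (fun v => ?_)
  set u := Q v with hu
  set w := v - Q v with hw
  set a := T u - Q (T u) with ha
  set b := Q (T w) with hb
  have hab : (T * Q - Q * T) v = a - b := by
    have : T v = T u + T w := by rw [← _root_.map_add]; congr 1; rw [hu, hw]; abel
    simp only [ContinuousLinearMap.sub_apply, ContinuousLinearMap.mul_apply, ha, hb, this,
      _root_.map_add]
    abel
  have horth : ⟪a, b⟫_ℂ = 0 := by
    rw [ha, hb]
    exact inner_eq_zero_symm.mp (orth (T w) (T u))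
  have hpy : ‖a - b‖ * ‖a - b‖ = ‖a‖ * ‖a‖ + ‖b‖ * ‖b‖ := by
    have h := norm_add_sq_eq_norm_sq_add_norm_sq_of_inner_eq_zero a (-b)
      (by rw [show ⟪a, -b⟫_ℂ = -⟪a, b⟫_ℂ from inner_neg_right _ _, horth, neg_zero])
    rw [← sub_eq_add_neg, norm_neg] at h
    exact h
  have hA : ‖a‖ ≤ ‖T‖ * ‖u‖ := by
    have h1 : ‖a‖ * ‖a‖ ≤ ‖T u‖ * ‖T u‖ := by
      have := pyth (T u)
      nlinarith [norm_nonneg (Q (T u))]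
    have h2 : ‖T u‖ ≤ ‖T‖ * ‖u‖ := T.le_opNorm u
    nlinarith [norm_nonneg a, norm_nonneg (T u), mul_nonneg (norm_nonneg T) (norm_nonneg u)]
  have hB : ‖b‖ ≤ ‖T‖ * ‖w‖ := by
    have h1 : ‖b‖ * ‖b‖ ≤ ‖T w‖ * ‖T w‖ := by
      have := pyth (T w)
      nlinarith [norm_nonneg (T w - Q (T w))]
    have h2 : ‖T w‖ ≤ ‖T‖ * ‖w‖ := T.le_opNorm w
    nlinarith [norm_nonneg b, norm_nonneg (T w), mul_nonneg (norm_nonneg T) (norm_nonneg w)]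
  have hv : ‖u‖ * ‖u‖ + ‖w‖ * ‖w‖ = ‖v‖ * ‖v‖ := pyth v
  rw [hab]
  have hA2 : ‖a‖ * ‖a‖ ≤ (‖T‖ * ‖u‖) * (‖T‖ * ‖u‖) :=
    mul_le_mul hA hA (norm_nonneg a) (mul_nonneg (norm_nonneg T) (norm_nonneg u))
  have hB2 : ‖b‖ * ‖b‖ ≤ (‖T‖ * ‖w‖) * (‖T‖ * ‖w‖) :=
    mul_le_mul hB hB (norm_nonneg b) (mul_nonneg (norm_nonneg T) (norm_nonneg w))
  have hvT : (‖T‖ * ‖u‖) * (‖T‖ * ‖u‖) + (‖T‖ * ‖w‖) * (‖T‖ * ‖w‖)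
      = (‖T‖ * ‖v‖) * (‖T‖ * ‖v‖) := by linear_combination (‖T‖ * ‖T‖) * hv
  nlinarith [hpy, hA2, hB2, hvT, norm_nonneg (a - b),
    mul_nonneg (norm_nonneg T) (norm_nonneg v)]

lemma mat_proj_comm_norm_le' {n : ℕ} (X P : Matrix (Fin n) (Fin n) ℂ)
    (h2 : P * P = P) (ha : Pᴴ = P) : ‖⁅X, P⁆‖ ≤ ‖X‖ := by
  rw [Ring.lie_def]
  let e := Matrix.toEuclideanCLM (n := Fin n) (𝕜 := ℂ)
  rw [Matrix.cstar_norm_def, Matrix.cstar_norm_def, map_sub, _root_.map_mul, _root_.map_mul]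
  refine clm_proj_comm_norm_le' (e X) (e P) ?_ ?_
  · rw [← _root_.map_mul, h2]
  · rw [← ContinuousLinearMap.star_eq_adjoint, ← map_star, Matrix.star_eq_conjTranspose, ha]

lemma hasDerivAt_lie' {𝕜 : Type*} [NontriviallyNormedField 𝕜] {𝔸 : Type*} [NormedRing 𝔸]
    [NormedAlgebra 𝕜 𝔸] {f g : 𝕜 → 𝔸} {f' g' : 𝔸} {t : 𝕜}
    (hf : HasDerivAt f f' t) (hg : HasDerivAt g g' t) :
    HasDerivAt (fun s => ⁅f s, g s⁆) (⁅f', g t⁆ + ⁅f t, g'⁆) t := by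
  simp only [Ring.lie_def]
  have h := (hf.mul hg).sub (hg.mul hf)
  exact h.congr_deriv (by noncomm_ring)

lemma hasDerivAt_clm_comp' {E F : Type*} [NormedAddCommGroup E] [NormedSpace ℂ E]
    [NormedAddCommGroup F] [NormedSpace ℂ F] (L : E →L[ℂ] F) {f : ℝ → E} {f' : E} {t : ℝ}
    (hf : HasDerivAt f f' t) : HasDerivAt (fun s => L (f s)) (L f') t := by
  have := (L.restrictScalars ℝ).hasFDerivAt.comp_hasDerivAt t hf
  exact this

lemma hasDerivAt_apply_comp' {Ng : ℕ}
    {A : ℝ → (Matrix (Fin Ng) (Fin Ng) ℂ →ₗ[ℂ] Matrix (Fin Ng) (Fin Ng) ℂ)}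
    {A' : Matrix (Fin Ng) (Fin Ng) ℂ →ₗ[ℂ] Matrix (Fin Ng) (Fin Ng) ℂ}
    {ρ' : ℝ → Matrix (Fin Ng) (Fin Ng) ℂ} {ρ'' : Matrix (Fin Ng) (Fin Ng) ℂ} {t : ℝ}
    (hA : ∀ X, HasDerivAt (fun s => A s X) (A' X) t)
    (hρ : HasDerivAt ρ' ρ'' t) :
    HasDerivAt (fun s => A s (ρ' s)) (A' (ρ' t) + A t ρ'') t := by
  classical
  set M := Matrix (Fin Ng) (Fin Ng) ℂ
  let b : Module.Basis (Fin Ng × Fin Ng) ℂ M := Matrix.stdBasis ℂ (Fin Ng) (Fin Ng)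
  let e : ((Fin Ng × Fin Ng) → M) ≃ₗ[ℂ] (M →L[ℂ] M) :=
    (b.constr ℂ).trans LinearMap.toContinuousLinearMap
  let Φ : ((Fin Ng × Fin Ng) → M) ≃L[ℂ] (M →L[ℂ] M) := e.toContinuousLinearEquiv
  have he : ∀ L : M →ₗ[ℂ] M, Φ (fun i => L (b i)) = LinearMap.toContinuousLinearMap L := by
    intro L
    show e (fun i => L (b i)) = _
    simp only [e, LinearEquiv.trans_apply]
    congr 1
    exact b.ext (fun i => by rw [Module.Basis.constr_basis])
  have hg : HasDerivAt (fun s i => A s (b i)) (fun i => A' (b i)) t :=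
    hasDerivAt_pi.2 (fun i => hA (b i))
  have hAc : HasDerivAt (fun s => LinearMap.toContinuousLinearMap (A s))
      (LinearMap.toContinuousLinearMap A') t := by
    have h := hasDerivAt_clm_comp' (E := (Fin Ng × Fin Ng) → M) (F := M →L[ℂ] M)
      (Φ : ((Fin Ng × Fin Ng) → M) →L[ℂ] M →L[ℂ] M) hg
    simp only [ContinuousLinearEquiv.coe_coe] at h
    have h1 : (fun s => Φ (fun i => A s (b i)))
        = fun s => LinearMap.toContinuousLinearMap (A s) := funext (fun s => he (A s))
    rwa [h1, he A'] at h
  let J := (ContinuousLinearMap.restrictScalarsIsometry ℂ M M ℝ ℂ).toContinuousLinearMap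
  have hAcR := hasDerivAt_clm_comp' J hAc
  have h2 := hAcR.clm_apply hρ
  simp only [J, LinearIsometry.coe_toContinuousLinearMap,
    ContinuousLinearMap.coe_restrictScalarsIsometry] at h2
  simpa using h2

lemma norm_negI_smul' {E : Type*} [NormedAddCommGroup E] [NormedSpace ℂ E] (x : E) :
    ‖(-Complex.I) • x‖ = ‖x‖ := by
  rw [norm_smul, norm_neg, Complex.norm_I, one_mul]

end Aux


/-- **Commutator bound on the third derivative of the spectral projector** along the
nonlinear von Neumann flow `i P' = [H, P]`, `i ρ' = [H, ρ]`, with the chain rules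
`H' = H_t + A(ρ')`, `H_t' = H_tt + B(ρ')`, `A'(X) = B(X) + C(ρ', X)`, and `P(t)` an
orthogonal projection for each `t`. -/
theorem pt_third_derivative_projector_bound
    (Ng : ℕ)
    (P ρ H Ht Htt : ℝ → Matrix (Fin Ng) (Fin Ng) ℂ)
    (A B : ℝ → (Matrix (Fin Ng) (Fin Ng) ℂ →ₗ[ℂ] Matrix (Fin Ng) (Fin Ng) ℂ))
    (C : ℝ → (Matrix (Fin Ng) (Fin Ng) ℂ →ₗ[ℂ]
          Matrix (Fin Ng) (Fin Ng) ℂ →ₗ[ℂ] Matrix (Fin Ng) (Fin Ng) ℂ))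
    (hP : Differentiable ℝ P) (hP' : Differentiable ℝ (deriv P))
    (hP'' : Differentiable ℝ (deriv (deriv P)))
    (hρ : Differentiable ℝ ρ) (hρ' : Differentiable ℝ (deriv ρ))
    (hρ'' : Differentiable ℝ (deriv (deriv ρ)))
    (hH : Differentiable ℝ H) (hH' : Differentiable ℝ (deriv H))
    (hHt : Differentiable ℝ Ht)
    (heqP : ∀ t, Complex.I • deriv P t = ⁅H t, P t⁆)
    (heqρ : ∀ t, Complex.I • deriv ρ t = ⁅H t, ρ t⁆)
    (hchainH : ∀ t, deriv H t = Ht t + A t (deriv ρ t))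
    (hchainHt : ∀ t, deriv Ht t = Htt t + B t (deriv ρ t))
    (hchainA : ∀ t X, HasDerivAt (fun s => A s X) (B t X + C t (deriv ρ t) X) t)
    (hproj : ∀ t, P t * P t = P t ∧ (P t)ᴴ = P t) :
    ∀ t, ‖deriv (deriv (deriv P)) t‖ ≤
      ‖⁅Htt t, P t⁆‖
      + 2 * ‖B t ⁅H t, ρ t⁆‖
      + ‖C t ⁅H t, ρ t⁆ ⁅H t, ρ t⁆‖
      + ‖A t ⁅Ht t, ρ t⁆‖
      + ‖A t ⁅A t ⁅H t, ρ t⁆, ρ t⁆‖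
      + ‖A t ⁅H t, ⁅H t, ρ t⁆⁆‖
      + 2 * ‖⁅Ht t, ⁅H t, P t⁆⁆‖
      + 2 * ‖⁅A t ⁅H t, ρ t⁆, ⁅H t, P t⁆⁆‖
      + ‖⁅H t, ⁅Ht t, P t⁆⁆‖
      + ‖⁅H t, ⁅A t ⁅H t, ρ t⁆, P t⁆⁆‖
      + ‖⁅H t, ⁅H t, ⁅H t, P t⁆⁆⁆‖ := by
  intro t
  letI := LieRing.ofAssociativeRing (A := Matrix (Fin Ng) (Fin Ng) ℂ)
  have hI : (-Complex.I) * Complex.I = 1 := by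
    simp [Complex.I_mul_I]
  -- first derivatives
  have dP : ∀ s, deriv P s = (-Complex.I) • ⁅H s, P s⁆ := by
    intro s
    have h : deriv P s = (-Complex.I) • (Complex.I • deriv P s) := by
      rw [smul_smul, hI, one_smul]
    rw [h, heqP s]
  have dρ : ∀ s, deriv ρ s = (-Complex.I) • ⁅H s, ρ s⁆ := by
    intro s
    have h : deriv ρ s = (-Complex.I) • (Complex.I • deriv ρ s) := by
      rw [smul_smul, hI, one_smul]
    rw [h, heqρ s]
  -- second derivatives
  have d2P : ∀ s, deriv (deriv P) s
      = (-Complex.I) • (⁅deriv H s, P s⁆ + ⁅H s, deriv P s⁆) := by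
    intro s
    have h : HasDerivAt (fun u => (-Complex.I) • ⁅H u, P u⁆)
        ((-Complex.I) • (⁅deriv H s, P s⁆ + ⁅H s, deriv P s⁆)) s :=
      (hasDerivAt_lie' ((hH s).hasDerivAt) ((hP s).hasDerivAt)).const_smul (-Complex.I)
    have h2 : deriv P = fun u => (-Complex.I) • ⁅H u, P u⁆ := funext dP
    conv_lhs => rw [h2]
    exact h.deriv
  have d2ρ : ∀ s, deriv (deriv ρ) s
      = (-Complex.I) • (⁅deriv H s, ρ s⁆ + ⁅H s, deriv ρ s⁆) := by
    intro s
    have h : HasDerivAt (fun u => (-Complex.I) • ⁅H u, ρ u⁆)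
        ((-Complex.I) • (⁅deriv H s, ρ s⁆ + ⁅H s, deriv ρ s⁆)) s :=
      (hasDerivAt_lie' ((hH s).hasDerivAt) ((hρ s).hasDerivAt)).const_smul (-Complex.I)
    have h2 : deriv ρ = fun u => (-Complex.I) • ⁅H u, ρ u⁆ := funext dρ
    conv_lhs => rw [h2]
    exact h.deriv
  -- second derivative of H
  have hAρ : HasDerivAt (fun s => A s (deriv ρ s))
      ((B t + C t (deriv ρ t)) (deriv ρ t) + A t (deriv (deriv ρ) t)) t :=
    hasDerivAt_apply_comp' (fun X => by simpa using hchainA t X) ((hρ' t).hasDerivAt)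
  have d2H : deriv (deriv H) t = (Htt t + B t (deriv ρ t))
      + ((B t + C t (deriv ρ t)) (deriv ρ t) + A t (deriv (deriv ρ) t)) := by
    have h2 : deriv H = fun s => Ht s + A s (deriv ρ s) := funext hchainH
    rw [h2, HasDerivAt.deriv (f := fun s => Ht s + A s (deriv ρ s))
      ((hHt t).hasDerivAt.add hAρ), hchainHt t]
  -- third derivative of P
  have d3 : deriv (deriv (deriv P)) t = (-Complex.I) •
      ((⁅deriv (deriv H) t, P t⁆ + ⁅deriv H t, deriv P t⁆)
        + (⁅deriv H t, deriv P t⁆ + ⁅H t, deriv (deriv P) t⁆)) := by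
    have h2 : deriv (deriv P)
        = fun s => (-Complex.I) • (⁅deriv H s, P s⁆ + ⁅H s, deriv P s⁆) := funext d2P
    conv_lhs => rw [h2]
    exact (((hasDerivAt_lie' ((hH' t).hasDerivAt) ((hP t).hasDerivAt)).add
      (hasDerivAt_lie' ((hH t).hasDerivAt) ((hP' t).hasDerivAt))).const_smul (-Complex.I)).deriv
  -- abbreviations
  set K := ⁅H t, ρ t⁆ with hK
  set Jc := ⁅H t, P t⁆ with hJ
  have hρ1 : deriv ρ t = (-Complex.I) • K := dρ t
  have hP1 : deriv P t = (-Complex.I) • Jc := dP t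
  have hH1 : deriv H t = Ht t + (-Complex.I) • A t K := by
    rw [hchainH t, hρ1, _root_.map_smul]
  have hproj2 := (hproj t).1
  have hprojH := (hproj t).2
  have hnn2 : ((-Complex.I) * (-Complex.I)) = -1 := by
    simp [Complex.I_mul_I]
  -- bound for the ⁅H'', P⁆ term
  have hb1 : ‖⁅deriv (deriv H) t, P t⁆‖ ≤ ‖⁅Htt t, P t⁆‖ + (2 * ‖B t K‖ + ‖C t K K‖
      + (‖A t ⁅Ht t, ρ t⁆‖ + ‖A t ⁅A t K, ρ t⁆‖ + ‖A t ⁅H t, K⁆‖)) := by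
    set W := B t (deriv ρ t) + ((B t + C t (deriv ρ t)) (deriv ρ t)
      + A t (deriv (deriv ρ) t)) with hW
    have hsplit : ⁅deriv (deriv H) t, P t⁆ = ⁅Htt t, P t⁆ + ⁅W, P t⁆ := by
      rw [d2H]
      have h : (Htt t + B t (deriv ρ t)) + ((B t + C t (deriv ρ t)) (deriv ρ t)
          + A t (deriv (deriv ρ) t)) = Htt t + W := by rw [hW]; abel
      rw [h, add_lie]
    rw [hsplit]
    refine le_trans (norm_add_le _ _) (add_le_add_right ?_ _)
    refine le_trans (mat_proj_comm_norm_le' W (P t) hproj2 hprojH) ?_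
    have e1 : ‖B t (deriv ρ t)‖ = ‖B t K‖ := by rw [hρ1, _root_.map_smul, norm_negI_smul']
    have e2 : ‖(B t + C t (deriv ρ t)) (deriv ρ t)‖ ≤ ‖B t K‖ + ‖C t K K‖ := by
      rw [LinearMap.add_apply]
      refine le_trans (norm_add_le _ _) ?_
      have e2a : ‖C t (deriv ρ t) (deriv ρ t)‖ = ‖C t K K‖ := by
        rw [hρ1]
        have hC1 : C t ((-Complex.I) • K) = (-Complex.I) • C t K := _root_.map_smul (C t) _ _
        rw [hC1, LinearMap.smul_apply, _root_.map_smul, smul_smul, hnn2, neg_one_smul, norm_neg]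
      rw [e1, e2a]
    have e3 : ‖A t (deriv (deriv ρ) t)‖
        ≤ ‖A t ⁅Ht t, ρ t⁆‖ + ‖A t ⁅A t K, ρ t⁆‖ + ‖A t ⁅H t, K⁆‖ := by
      rw [d2ρ t, _root_.map_smul, norm_negI_smul', _root_.map_add]
      refine le_trans (norm_add_le _ _) ?_
      have e3a : ‖A t ⁅deriv H t, ρ t⁆‖ ≤ ‖A t ⁅Ht t, ρ t⁆‖ + ‖A t ⁅A t K, ρ t⁆‖ := by
        rw [hH1, add_lie, smul_lie, map_add, _root_.map_smul]
        refine le_trans (norm_add_le _ _) ?_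
        rw [norm_negI_smul']
      have e3b : ‖A t ⁅H t, deriv ρ t⁆‖ = ‖A t ⁅H t, K⁆‖ := by
        rw [hρ1, lie_smul, _root_.map_smul, norm_negI_smul']
      rw [e3b]
      linarith
    calc ‖W‖ ≤ ‖B t (deriv ρ t)‖ + ‖(B t + C t (deriv ρ t)) (deriv ρ t)
          + A t (deriv (deriv ρ) t)‖ := norm_add_le _ _
      _ ≤ ‖B t (deriv ρ t)‖ + (‖(B t + C t (deriv ρ t)) (deriv ρ t)‖
          + ‖A t (deriv (deriv ρ) t)‖) := by
            exact add_le_add_right (norm_add_le _ _) _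
      _ ≤ _ := by rw [e1]; linarith
  -- bound for the ⁅H', P'⁆ term
  have hb2 : ‖⁅deriv H t, deriv P t⁆‖ ≤ ‖⁅Ht t, Jc⁆‖ + ‖⁅A t K, Jc⁆‖ := by
    rw [hP1, lie_smul, norm_negI_smul', hH1, add_lie, smul_lie]
    refine le_trans (norm_add_le _ _) ?_
    rw [norm_negI_smul']
  -- bound for the ⁅H, P''⁆ term
  have hb3 : ‖⁅H t, deriv (deriv P) t⁆‖
      ≤ ‖⁅H t, ⁅Ht t, P t⁆⁆‖ + ‖⁅H t, ⁅A t K, P t⁆⁆‖ + ‖⁅H t, ⁅H t, Jc⁆⁆‖ := by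
    rw [d2P t, lie_smul, norm_negI_smul', lie_add]
    refine le_trans (norm_add_le _ _) ?_
    have f1 : ‖⁅H t, ⁅deriv H t, P t⁆⁆‖ ≤ ‖⁅H t, ⁅Ht t, P t⁆⁆‖ + ‖⁅H t, ⁅A t K, P t⁆⁆‖ := by
      rw [hH1, add_lie, smul_lie, lie_add, lie_smul]
      refine le_trans (norm_add_le _ _) ?_
      rw [norm_negI_smul']
    have f2 : ‖⁅H t, ⁅H t, deriv P t⁆⁆‖ = ‖⁅H t, ⁅H t, Jc⁆⁆‖ := by
      rw [hP1, lie_smul, lie_smul, norm_negI_smul']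
    rw [f2]
    linarith
  -- assemble
  rw [d3, norm_negI_smul']
  have tri : ‖(⁅deriv (deriv H) t, P t⁆ + ⁅deriv H t, deriv P t⁆)
        + (⁅deriv H t, deriv P t⁆ + ⁅H t, deriv (deriv P) t⁆)‖
      ≤ (‖⁅deriv (deriv H) t, P t⁆‖ + ‖⁅deriv H t, deriv P t⁆‖)
        + (‖⁅deriv H t, deriv P t⁆‖ + ‖⁅H t, deriv (deriv P) t⁆‖) :=
    le_trans (norm_add_le _ _) (add_le_add (norm_add_le _ _) (norm_add_le _ _))
  linarith
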